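/- Let ρ ∈ (0,1] and n ≥ 0 an integer. Define u(i) = ρ/(nρ+1) for 0 ≤ i ≤ n and u(i) = (1-ρ)^{i-n}·ρ/(nρ+1) for i ≥ n+1. Then Σ_{i=0}^{∞} u(i) = 1, and u is a stationary distribution of the Markov chain on ℕ in which from state i < n the chain moves to i+1 with probability 1, and from state i ≥ n the chain moves to state 0 with probability ρ and to state i+1 with probability 1-ρ. -/

import Mathlib

theorem stmt_11 (ρ : ℝ) (hρ : 0 < ρ) (hρ1 : ρ ≤ 1) (n : ℕ)
    (u : ℕ → ℝ)
    (hu : ∀ i, u i = if i ≤ n then ρ / ((n : ℝ) * ρ + 1)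
      else (1 - ρ) ^ (i - n) * ρ / ((n : ℝ) * ρ + 1))
    (P : ℕ → ℕ → ℝ)
    (hP : ∀ i j, P i j = if i < n then (if j = i + 1 then 1 else 0)
      else (if j = 0 then ρ else if j = i + 1 then 1 - ρ else 0)) :
    (∑' i : ℕ, u i) = 1 ∧ ∀ j : ℕ, u j = ∑' i : ℕ, P i j * u i := by
  have hD : (0:ℝ) < (n:ℝ)*ρ+1 := by positivity
  have hDne : (n:ℝ)*ρ+1 ≠ 0 := ne_of_gt hD
  have hρne : ρ ≠ 0 := ne_of_gt hρ
  have hr0 : (0:ℝ) ≤ 1 - ρ := by linarith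
  have hr1 : 1 - ρ < 1 := by linarith
  have hgeo : Summable (fun i : ℕ => (1-ρ)^i) := summable_geometric_of_lt_one hr0 hr1
  have hgeosum : ∑' i:ℕ, (1-ρ)^i = ρ⁻¹ := by
    rw [tsum_geometric_of_lt_one hr0 hr1]
    norm_num
  have hshift : (fun i => u (i + (n+1))) = fun i => (1-ρ)^i * ((1-ρ)*(ρ/((n:ℝ)*ρ+1))) := by
    funext i
    rw [hu, if_neg (by omega)]
    have h2 : i + (n+1) - n = i+1 := by omega
    rw [h2]; ring
  have hsum : Summable u := by
    rw [← summable_nat_add_iff (n+1)]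
    rw [hshift]
    exact hgeo.mul_right _
  have htail : ∑' i, u (i + (n+1)) = (1-ρ)/((n:ℝ)*ρ+1) := by
    rw [hshift, tsum_mul_right, hgeosum]
    field_simp
  have htotal : (∑' i : ℕ, u i) = 1 := by
    rw [← Summable.sum_add_tsum_nat_add (n+1) hsum, htail]
    have h1 : ∑ i ∈ Finset.range (n+1), u i = ((n:ℝ)+1) * (ρ/((n:ℝ)*ρ+1)) := by
      have hc : ∀ i ∈ Finset.range (n+1), u i = ρ/((n:ℝ)*ρ+1) := by
        intro i hi
        rw [hu, if_pos (by simpa [Nat.lt_succ_iff] using Finset.mem_range.mp hi)]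
      rw [Finset.sum_congr rfl hc, Finset.sum_const, Finset.card_range, nsmul_eq_mul]
      push_cast; ring
    rw [h1]
    field_simp
    ring
  refine ⟨htotal, fun j => ?_⟩
  cases j with
  | zero =>
    have hsn : Summable (fun i => u (i+n)) := (summable_nat_add_iff n).2 hsum
    have htn : ∑' i, u (i+n) = 1/((n:ℝ)*ρ+1) := by
      rw [Summable.tsum_eq_zero_add hsn]
      have h1 : u (0+n) = ρ/((n:ℝ)*ρ+1) := by
        rw [hu, if_pos (by omega)]
      have h2 : (fun i => u (i+1+n)) = fun i => (1-ρ)^i * ((1-ρ)*(ρ/((n:ℝ)*ρ+1))) := by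
        funext i
        rw [hu, if_neg (by omega)]
        have h3 : i+1+n-n = i+1 := by omega
        rw [h3]; ring
      rw [h1, h2, tsum_mul_right, hgeosum]
      field_simp
      ring
    have hPf : (fun i => P i 0 * u i) = fun i => (if i < n then 0 else ρ) * u i := by
      funext i
      rw [hP]
      by_cases h : i < n
      · simp [h]
      · simp [h]
    have hgshift : (fun i => (if i+n < n then (0:ℝ) else ρ) * u (i+n)) = fun i => ρ * u (i+n) := by
      funext i
      rw [if_neg (by omega)]
    have hg : Summable (fun i => (if i < n then (0:ℝ) else ρ) * u i) := by
      apply (summable_nat_add_iff n).1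
      rw [hgshift]
      exact hsn.mul_left ρ
    rw [hPf, ← Summable.sum_add_tsum_nat_add n hg, hgshift]
    have hz : ∑ i ∈ Finset.range n, (if i < n then (0:ℝ) else ρ) * u i = 0 := by
      apply Finset.sum_eq_zero
      intro i hi
      rw [if_pos (Finset.mem_range.mp hi)]
      ring
    rw [hz, tsum_mul_left, htn, hu, if_pos (by omega)]
    field_simp
    ring
  | succ k =>
    have hone : ∀ i, i ≠ k → P i (k+1) * u i = 0 := by
      intro i hi
      rw [hP]
      have h1 : ¬ (k+1 = i+1) := by omega
      have h2 : ¬ (k+1 = 0) := by omega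
      simp [h1, h2, Ne.symm hi]
    rw [tsum_eq_single k hone]
    rw [hP]
    by_cases hk : k < n
    · rw [if_pos hk, if_pos rfl, hu, hu, if_pos (by omega), if_pos (by omega)]
      ring
    · rw [if_neg hk, if_neg (by omega), if_pos rfl, hu (k+1), if_neg (by omega)]
      by_cases hk2 : k = n
      · rw [hu, if_pos (by omega)]
        have : k+1-n = 1 := by omega
        rw [this, pow_one]
        ring
      · rw [hu, if_neg (by omega)]
        have h4 : k+1-n = (k-n)+1 := by omega
        rw [h4, pow_succ]
        ring
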